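/- Let δ > 0 and τ ∈ ℝ with τ < 2√δ, and let λ be a root of λ² - τλ + δ = 0. If τ² - 4δ < 0 (complex conjugate roots), then |λ| = √δ and cos(arg λ) = τ/(2√δ); consequently the Matignon condition |arg λ| > βπ/2 is equivalent to τ < 2√δ·cos(βπ/2) for β ∈ (0,1]. -/

import Mathlib

theorem stmt18 (δ τ : ℝ) (hδ : 0 < δ) (hτ : τ < 2 * Real.sqrt δ) (lam : ℂ)
    (hroot : lam ^ 2 - (τ : ℂ) * lam + (δ : ℂ) = 0)
    (hdisc : τ ^ 2 - 4 * δ < 0) :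
    ‖lam‖ = Real.sqrt δ ∧
    Real.cos (Complex.arg lam) = τ / (2 * Real.sqrt δ) ∧
    ∀ β : ℝ, 0 < β → β ≤ 1 →
      (|Complex.arg lam| > β * Real.pi / 2 ↔
        τ < 2 * Real.sqrt δ * Real.cos (β * Real.pi / 2)) := by
  set a := lam.re with ha
  set b := lam.im with hb
  have hre : a * a - b * b - τ * a + δ = 0 := by
    have := congrArg Complex.re hroot
    simpa [pow_two, Complex.mul_re, Complex.sub_re, Complex.add_re] using this
  have him : a * b + b * a - τ * b = 0 := by
    have := congrArg Complex.im hroot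
    simpa [pow_two, Complex.mul_im, Complex.sub_im, Complex.add_im] using this
  have hbne : b ≠ 0 := by
    intro h
    rw [h] at hre
    nlinarith [sq_nonneg (2 * a - τ)]
  have haτ : a = τ / 2 := by
    have h2 : b * (2 * a - τ) = 0 := by ring_nf; linarith [him]
    rcases mul_eq_zero.mp h2 with h | h
    · exact absurd h hbne
    · linarith
  have hnormsq : a ^ 2 + b ^ 2 = δ := by rw [haτ] at hre ⊢; nlinarith [hre]
  have hsδ : (0:ℝ) < Real.sqrt δ := Real.sqrt_pos.mpr hδ
  have habs : ‖lam‖ = Real.sqrt δ := by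
    have h1 : (‖lam‖) ^ 2 = δ := by
      rw [Complex.sq_norm, Complex.normSq_apply]; nlinarith [hnormsq]
    have := congrArg Real.sqrt h1
    rwa [Real.sqrt_sq (norm_nonneg lam)] at this
  have hne : lam ≠ 0 := by
    intro h
    exact hbne (by simp [hb, h])
  have hcos : Real.cos (Complex.arg lam) = τ / (2 * Real.sqrt δ) := by
    rw [Complex.cos_arg hne, habs, ← ha, haτ]
    field_simp
  refine ⟨habs, hcos, ?_⟩
  intro β hβ0 hβ1
  have hπ := Real.pi_pos
  have hmem1 : |Complex.arg lam| ∈ Set.Icc 0 Real.pi :=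
    ⟨abs_nonneg _, Complex.abs_arg_le_pi lam⟩
  have hmem2 : β * Real.pi / 2 ∈ Set.Icc 0 Real.pi := by
    constructor
    · positivity
    · nlinarith
  have hcosabs : Real.cos |Complex.arg lam| = τ / (2 * Real.sqrt δ) := by
    rw [Real.cos_abs]; exact hcos
  constructor
  · intro h
    have := Real.strictAntiOn_cos hmem2 hmem1 h
    rw [hcosabs] at this
    calc τ = (τ / (2 * Real.sqrt δ)) * (2 * Real.sqrt δ) := by field_simp
    _ < Real.cos (β * Real.pi / 2) * (2 * Real.sqrt δ) := by
        apply mul_lt_mul_of_pos_right this; positivity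
    _ = 2 * Real.sqrt δ * Real.cos (β * Real.pi / 2) := by ring
  · intro h
    have hlt : τ / (2 * Real.sqrt δ) < Real.cos (β * Real.pi / 2) := by
      rw [div_lt_iff₀ (by positivity)]; linarith [h]
    rw [← hcosabs] at hlt
    by_contra hcon
    push_neg at hcon
    have := Real.strictAntiOn_cos.le_iff_ge hmem2 hmem1 |>.mpr hcon
    linarith
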